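/- Let n, k ≥ 1 with gcd(n, k) = g. Then the subalgebra DO_n(kℤ) of n-periodic difference operators supported in multiples of k (i.e. finite sums Σ_j a^(j) T^{kj} with n-periodic coefficients) is isomorphic as an associative algebra to the g-fold direct product of the algebra DO_{n/g} of (n/g)-periodic difference operators; in particular, if gcd(n,k) = 1, then DO_n(kℤ) ≅ DO_n. -/

import Mathlib

/-- The shift operator by `j` on bi-infinite real sequences: `(shiftZ j v) i = v (i + j)`.
In particular `shiftZ 1` is the left shift `T`. -/
def shiftZ (j : ℤ) : Module.End ℝ (ℤ → ℝ) where
  toFun v := fun i => v (i + j)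
  map_add' _ _ := rfl
  map_smul' _ _ := rfl

/-- The scalar operator associated with a sequence `a`: `(scalOp a v) i = a i * v i`. -/
def scalOp (a : ℤ → ℝ) : Module.End ℝ (ℤ → ℝ) where
  toFun v := fun i => a i * v i
  map_add' u v := by funext i; simp [mul_add]
  map_smul' c v := by funext i; simp [smul_eq_mul]; ring

/-- The algebra `DO_n(kℤ)` of `n`-periodic difference operators supported in multiples
of `k`: the algebra generated by `n`-periodic scalar operators together with `T^k` and
`T^(-k)` (its elements are the finite sums `Σ_j a⁽ʲ⁾ T^{kj}` with `n`-periodic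
coefficients). In particular `DOk n 1` is the full algebra `DO_n`. -/
noncomputable def DOk (n k : ℕ) : Subalgebra ℝ (Module.End ℝ (ℤ → ℝ)) :=
  Algebra.adjoin ℝ
    ({E | ∃ a : ℤ → ℝ, (∀ i : ℤ, a (i + n) = a i) ∧ E = scalOp a} ∪
      {shiftZ k, shiftZ (-k)})

namespace DOkProof

@[simp] lemma shiftZ_apply (j : ℤ) (v : ℤ → ℝ) (i : ℤ) : shiftZ j v i = v (i + j) := rfl
@[simp] lemma scalOp_apply (a : ℤ → ℝ) (v : ℤ → ℝ) (i : ℤ) : scalOp a v i = a i * v i := rfl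

lemma shiftZ_mul (a b : ℤ) : shiftZ a * shiftZ b = shiftZ (a + b) := by
  apply LinearMap.ext; intro v; funext i
  show v (i + a + b) = v (i + (a+b)); congr 1; ring

@[simp] lemma shiftZ_zero : shiftZ 0 = 1 := by
  apply LinearMap.ext; intro v; funext i; show v (i+0) = v i; rw [add_zero]

lemma scalOp_mul (a b : ℤ → ℝ) : scalOp a * scalOp b = scalOp (fun i => a i * b i) := by
  apply LinearMap.ext; intro v; funext i
  show a i * (b i * v i) = a i * b i * v i; ring

@[simp] lemma scalOp_one : scalOp (fun _ => (1:ℝ)) = 1 := by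
  apply LinearMap.ext; intro v; funext i; show 1 * v i = v i; ring

@[simp] lemma scalOp_zero : scalOp (fun _ => (0:ℝ)) = 0 := by
  apply LinearMap.ext; intro v; funext i; show 0 * v i = 0; ring

lemma shiftZ_mul_scalOp (j : ℤ) (a : ℤ → ℝ) :
    shiftZ j * scalOp a = scalOp (fun i => a (i + j)) * shiftZ j := by
  apply LinearMap.ext; intro v; funext i
  show a (i+j) * v (i+j) = a (i+j) * v (i+j); rfl

/-- ℤ-multiple periodicity. -/
lemma periodic_dvd {a : ℤ → ℝ} {n : ℕ} (ha : ∀ i : ℤ, a (i + n) = a i)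
    {x y : ℤ} (h : (n:ℤ) ∣ x - y) : a x = a y := by
  obtain ⟨t, ht⟩ := h
  have key : ∀ t : ℤ, ∀ y : ℤ, a (y + n * t) = a y := by
    intro t
    induction t using Int.induction_on with
    | zero => intro y; simp
    | succ t ih => intro y
                   have : y + n * (t+1) = (y + n * t) + n := by ring
                   rw [this, ha, ih]
    | pred t ih => intro y
                   have : (y + n * (-t - 1)) + n = y + n * (-t) := by ring
                   have h2 := ha (y + n * (-t-1))
                   rw [this] at h2
                   rw [← h2]; exact ih y
  have : x = y + n * t := by omega
  rw [this, key]


variable (k : ℕ)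

/-- π_r : restriction to the coset r + kℤ, reindexed. -/
def pmap (r : ℤ) : (ℤ → ℝ) →ₗ[ℝ] (ℤ → ℝ) where
  toFun v := fun i => v (r + k * i)
  map_add' _ _ := rfl
  map_smul' _ _ := rfl

/-- ι_r : extension of a sequence onto the coset r + kℤ, zero elsewhere. -/
noncomputable def imap (r : ℤ) : (ℤ → ℝ) →ₗ[ℝ] (ℤ → ℝ) where
  toFun v := fun i => if (k:ℤ) ∣ (i - r) then v ((i - r) / k) else 0
  map_add' u v := by funext i; by_cases h : (k:ℤ) ∣ (i - r) <;> simp [h]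
  map_smul' c v := by funext i; by_cases h : (k:ℤ) ∣ (i - r) <;> simp [h]

@[simp] lemma pmap_apply (r : ℤ) (v : ℤ → ℝ) (i : ℤ) : pmap k r v i = v (r + k * i) := rfl
@[simp] lemma imap_apply (r : ℤ) (v : ℤ → ℝ) (i : ℤ) :
    imap k r v i = if (k:ℤ) ∣ (i - r) then v ((i - r) / k) else 0 := rfl

/-- the coset projection operator -/
noncomputable def Pop (r : ℤ) : Module.End ℝ (ℤ → ℝ) :=
  scalOp (fun i => if (k:ℤ) ∣ (i - r) then 1 else 0)

/-- the component of an operator on the coset r + kℤ -/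
noncomputable def Phi (r : ℤ) (E : Module.End ℝ (ℤ → ℝ)) : Module.End ℝ (ℤ → ℝ) :=
  (pmap k r) * E * (imap k r)

variable {k} (hk : 1 ≤ k)
include hk

lemma knz : (k:ℤ) ≠ 0 := by exact_mod_cast Nat.one_le_iff_ne_zero.mp hk

lemma pmap_imap (r : ℤ) : (pmap k r) * (imap k r) = 1 := by
  apply LinearMap.ext; intro v; funext i
  have h : (k:ℤ) ∣ (r + k * i - r) := ⟨i, by ring⟩
  show (imap k r v) (r + k * i) = v i
  simp only [imap_apply, if_pos h]
  congr 1
  have : r + (k:ℤ) * i - r = k * i := by ring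
  rw [this, Int.mul_ediv_cancel_left _ (knz hk)]

lemma imap_pmap (r : ℤ) : (imap k r) * (pmap k r) = Pop k r := by
  apply LinearMap.ext; intro v; funext i
  show (imap k r (pmap k r v)) i = (Pop k r v) i
  simp only [imap_apply, pmap_apply, Pop, scalOp_apply]
  by_cases h : (k:ℤ) ∣ (i - r)
  · obtain ⟨c, hc⟩ := h
    have h' : (k:ℤ) ∣ (i - r) := ⟨c, hc⟩
    rw [if_pos h', if_pos h', one_mul, hc, Int.mul_ediv_cancel_left _ (knz hk)]
    congr 1; omega
  · rw [if_neg h, if_neg h, zero_mul]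

lemma pmap_Pop (r : ℤ) : (pmap k r) * Pop k r = pmap k r := by
  rw [← imap_pmap hk, ← mul_assoc, pmap_imap hk, one_mul]

lemma Pop_imap (r : ℤ) : Pop k r * (imap k r) = imap k r := by
  rw [← imap_pmap hk, mul_assoc, pmap_imap hk, mul_one]

lemma Phi_one (r : ℤ) : Phi k r 1 = 1 := by
  unfold Phi; rw [mul_one, pmap_imap hk]

lemma Phi_mul (r : ℤ) {E F : Module.End ℝ (ℤ → ℝ)} (hE : E * Pop k r = Pop k r * E) :
    Phi k r (E * F) = Phi k r E * Phi k r F := by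
  unfold Phi
  calc pmap k r * (E * F) * imap k r
      = (pmap k r * Pop k r) * (E * F) * imap k r := by rw [pmap_Pop hk]
    _ = pmap k r * ((Pop k r * E) * F) * imap k r := by noncomm_ring
    _ = pmap k r * ((E * Pop k r) * F) * imap k r := by rw [hE]
    _ = (pmap k r * E) * (imap k r * pmap k r) * (F * imap k r) := by
        rw [imap_pmap hk]; noncomm_ring
    _ = pmap k r * E * imap k r * (pmap k r * F * imap k r) := by noncomm_ring

omit hk in
lemma scalOp_congr {a b : ℤ → ℝ} (h : ∀ i, a i = b i) : scalOp a = scalOp b := by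
  rw [funext h]

lemma Phi_scalOp (r : ℤ) (a : ℤ → ℝ) :
    Phi k r (scalOp a) = scalOp (fun i => a (r + k * i)) := by
  apply LinearMap.ext; intro v; funext i
  show (scalOp a (imap k r v)) (r + k * i) = a (r + k * i) * v i
  have h : (k:ℤ) ∣ (r + k * i - r) := ⟨i, by ring⟩
  simp only [scalOp_apply, imap_apply, if_pos h]
  congr 2
  have : r + (k:ℤ) * i - r = k * i := by ring
  rw [this, Int.mul_ediv_cancel_left _ (knz hk)]

lemma Phi_shift_pos (r : ℤ) : Phi k r (shiftZ k) = shiftZ 1 := by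
  apply LinearMap.ext; intro v; funext i
  show (imap k r v) (r + k * i + k) = v (i + 1)
  have h : (k:ℤ) ∣ (r + k * i + k - r) := ⟨i + 1, by ring⟩
  simp only [imap_apply, if_pos h]
  congr 1
  have : r + (k:ℤ) * i + k - r = k * (i + 1) := by ring
  rw [this, Int.mul_ediv_cancel_left _ (knz hk)]

lemma Phi_shift_neg (r : ℤ) : Phi k r (shiftZ (-k)) = shiftZ (-1) := by
  apply LinearMap.ext; intro v; funext i
  show (imap k r v) (r + k * i + -k) = v (i + -1)
  have h : (k:ℤ) ∣ (r + k * i + -k - r) := ⟨i - 1, by ring⟩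
  simp only [imap_apply, if_pos h]
  congr 1
  have : r + (k:ℤ) * i + -k - r = k * (i + -1) := by ring
  rw [this, Int.mul_ediv_cancel_left _ (knz hk)]

omit hk

lemma Phi_add (r : ℤ) (E F : Module.End ℝ (ℤ → ℝ)) :
    Phi k r (E + F) = Phi k r E + Phi k r F := by
  unfold Phi; noncomm_ring

lemma Phi_algebraMap (hk : 1 ≤ k) (r : ℤ) (c : ℝ) :
    Phi k r (algebraMap ℝ (Module.End ℝ (ℤ → ℝ)) c) = algebraMap ℝ _ c := by
  rw [Algebra.algebraMap_eq_smul_one]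
  unfold Phi
  rw [mul_smul_comm, mul_one, smul_mul_assoc, pmap_imap hk]

-- commutation of the generators of DOk n k with Pop k r and shiftZ (t*n)
lemma scal_comm_Pop (a : ℤ → ℝ) (r : ℤ) : scalOp a * Pop k r = Pop k r * scalOp a := by
  unfold Pop; rw [scalOp_mul, scalOp_mul]
  apply scalOp_congr; intro i; ring

lemma shift_comm_Pop (j : ℤ) (hj : (k:ℤ) ∣ j) (r : ℤ) :
    shiftZ j * Pop k r = Pop k r * shiftZ j := by
  unfold Pop
  rw [shiftZ_mul_scalOp]
  congr 1
  apply scalOp_congr; intro i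
  have : ((k:ℤ) ∣ i + j - r) ↔ ((k:ℤ) ∣ i - r) := by
    constructor <;> intro h
    · have h2 := Int.dvd_sub h hj
      have e : i + j - r - j = i - r := by ring
      rwa [e] at h2
    · have h2 := Int.dvd_add h hj
      have e : i - r + j = i + j - r := by ring
      rwa [e] at h2
  simp only [this]

lemma scal_comm_shift {n : ℕ} (a : ℤ → ℝ) (ha : ∀ i : ℤ, a (i + n) = a i) (t : ℤ) :
    scalOp a * shiftZ (t * n) = shiftZ (t * n) * scalOp a := by
  rw [shiftZ_mul_scalOp]
  congr 1
  apply scalOp_congr; intro i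
  exact (periodic_dvd ha ⟨t, by ring⟩).symm

lemma shift_comm_shift (j j' : ℤ) : shiftZ j * shiftZ j' = shiftZ j' * shiftZ j := by
  rw [shiftZ_mul, shiftZ_mul, add_comm]

lemma scalOp_mem (n k : ℕ) {a : ℤ → ℝ} (ha : ∀ i : ℤ, a (i + n) = a i) :
    scalOp a ∈ DOk n k := Algebra.subset_adjoin (Or.inl ⟨a, ha, rfl⟩)

lemma shift_mem (n k : ℕ) : shiftZ k ∈ DOk n k :=
  Algebra.subset_adjoin (Or.inr (by simp))

lemma shift_neg_mem (n k : ℕ) : shiftZ (-(k:ℤ)) ∈ DOk n k :=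
  Algebra.subset_adjoin (Or.inr (by simp))

lemma shift_one_mem (n : ℕ) : shiftZ 1 ∈ DOk n 1 := by
  have := shift_mem n 1; simpa using this

lemma shift_neg_one_mem (n : ℕ) : shiftZ (-1) ∈ DOk n 1 := by
  have := shift_neg_mem n 1; simpa using this

def good (n k : ℕ) (E : Module.End ℝ (ℤ → ℝ)) : Prop :=
  (∀ r : ℤ, E * Pop k r = Pop k r * E) ∧
  (∀ t : ℤ, E * shiftZ (t * n) = shiftZ (t * n) * E) ∧
  (∀ r : ℤ, Phi k r E ∈ DOk (n / Nat.gcd n k) 1)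

lemma km_dvd (n k : ℕ) (hn : 1 ≤ n) (hk : 1 ≤ k) :
    (n:ℤ) ∣ (k:ℤ) * (↑(n / Nat.gcd n k) : ℤ) := by
  set g := Nat.gcd n k with hg
  have h1 : g * (k / g) = k := Nat.mul_div_cancel' (Nat.gcd_dvd_right n k)
  have h2 : g * (n / g) = n := Nat.mul_div_cancel' (Nat.gcd_dvd_left n k)
  have key : k * (n / g) = n * (k / g) := by
    calc k * (n / g) = (g * (k / g)) * (n / g) := by rw [h1]
      _ = (g * (n / g)) * (k / g) := by ring
      _ = n * (k / g) := by rw [h2]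
  refine ⟨(k / g : ℕ), ?_⟩
  exact_mod_cast congrArg (Nat.cast : ℕ → ℤ) key

lemma good_of_mem {n k : ℕ} (hn : 1 ≤ n) (hk : 1 ≤ k) {E : Module.End ℝ (ℤ → ℝ)}
    (hE : E ∈ DOk n k) : good n k E := by
  set m := n / Nat.gcd n k with hm
  induction hE using Algebra.adjoin_induction with
  | mem x hx =>
    rcases hx with hscal | hsh
    · obtain ⟨a, ha, rfl⟩ := hscal
      refine ⟨fun r => scal_comm_Pop a r, fun t => scal_comm_shift a ha t, fun r => ?_⟩
      rw [Phi_scalOp hk]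
      apply scalOp_mem
      intro i
      apply periodic_dvd ha
      have e : r + (k:ℤ) * (i + m) - (r + k * i) = k * m := by ring
      rw [e]
      exact km_dvd n k hn hk
    · rcases hsh with h | h
      · subst h
        refine ⟨fun r => shift_comm_Pop _ ⟨1, by ring⟩ r,
          fun t => shift_comm_shift _ _, fun r => ?_⟩
        rw [Phi_shift_pos hk]
        exact shift_one_mem m
      · rw [Set.mem_singleton_iff] at h
        subst h
        refine ⟨fun r => shift_comm_Pop _ ⟨-1, by ring⟩ r,
          fun t => shift_comm_shift _ _, fun r => ?_⟩
        rw [Phi_shift_neg hk]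
        exact shift_neg_one_mem m
  | algebraMap c =>
    refine ⟨fun r => Algebra.commutes c _, fun t => Algebra.commutes c _,
      fun r => ?_⟩
    rw [Phi_algebraMap hk]
    exact Subalgebra.algebraMap_mem _ c
  | add x y hx hy ihx ihy =>
    refine ⟨fun r => by rw [add_mul, mul_add, ihx.1 r, ihy.1 r],
      fun t => by rw [add_mul, mul_add, ihx.2.1 t, ihy.2.1 t],
      fun r => by rw [Phi_add]; exact add_mem (ihx.2.2 r) (ihy.2.2 r)⟩
  | mul x y hx hy ihx ihy =>
    refine ⟨fun r => ?_, fun t => ?_, fun r => ?_⟩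
    · rw [mul_assoc, ihy.1 r, ← mul_assoc, ihx.1 r, mul_assoc]
    · rw [mul_assoc, ihy.2.1 t, ← mul_assoc, ihx.2.1 t, mul_assoc]
    · rw [Phi_mul hk r (ihx.1 r)]
      exact mul_mem (ihx.2.2 r) (ihy.2.2 r)

include hk

lemma pmap_conj (ρ s t : ℤ) (n : ℕ) :
    (pmap k (ρ + s * k + t * n) : Module.End ℝ (ℤ → ℝ)) =
      (shiftZ s : Module.End ℝ (ℤ → ℝ)) * pmap k ρ * shiftZ (t * n) := by
  apply LinearMap.ext; intro v; funext i
  show v (ρ + s * k + t * n + k * i) = v (ρ + k * (i + s) + t * n)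
  congr 1; ring

lemma imap_conj (ρ s t : ℤ) (n : ℕ) :
    (imap k (ρ + s * k + t * n) : Module.End ℝ (ℤ → ℝ)) =
      (shiftZ (-(t * n)) : Module.End ℝ (ℤ → ℝ)) * imap k ρ * shiftZ (-s) := by
  apply LinearMap.ext; intro v; funext i
  show (if (k:ℤ) ∣ i - (ρ + s * k + t * n) then v ((i - (ρ + s * k + t * n)) / k) else 0)
      = imap k ρ (shiftZ (-s) v) (i + -(t * n))
  simp only [imap_apply, shiftZ_apply]
  have hiff : ((k:ℤ) ∣ i - (ρ + s * k + t * n)) ↔ ((k:ℤ) ∣ i + -(t * n) - ρ) := by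
    constructor <;> intro h
    · have h2 := Int.dvd_add h ⟨s, rfl⟩
      have e : i - (ρ + s * k + t * n) + k * s = i + -(t * n) - ρ := by ring
      rwa [e] at h2
    · have h2 := Int.dvd_sub h ⟨s, rfl⟩
      have e : i + -(t * n) - ρ - k * s = i - (ρ + s * k + t * n) := by ring
      rwa [e] at h2
  by_cases h : (k:ℤ) ∣ i - (ρ + s * k + t * n)
  · rw [if_pos h, if_pos (hiff.mp h)]
    congr 1
    have e : i + -(t * n) - ρ = (i - (ρ + s * k + t * n)) + s * k := by ring
    rw [e, Int.add_mul_ediv_right _ _ (knz hk)]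
    ring
  · rw [if_neg h, if_neg (fun hc => h (hiff.mpr hc))]

lemma Phi_conj (ρ s t : ℤ) {n : ℕ} {E : Module.End ℝ (ℤ → ℝ)}
    (hE : ∀ t : ℤ, E * shiftZ (t * n) = shiftZ (t * n) * E) :
    Phi k (ρ + s * k + t * n) E = shiftZ s * Phi k ρ E * shiftZ (-s) := by
  unfold Phi
  rw [pmap_conj hk, imap_conj hk]
  have h1 : (shiftZ (t * n) : Module.End ℝ (ℤ → ℝ)) * E * shiftZ (-(t * n)) = E := by
    rw [← hE t, mul_assoc, shiftZ_mul]
    simp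
  calc shiftZ s * pmap k ρ * shiftZ (t * n) * E * (shiftZ (-(t * n)) * imap k ρ * shiftZ (-s))
      = shiftZ s * pmap k ρ * (shiftZ (t * n) * E * shiftZ (-(t * n))) * imap k ρ * shiftZ (-s) := by
        noncomm_ring
    _ = shiftZ s * (pmap k ρ * E * imap k ρ) * shiftZ (-s) := by rw [h1]; noncomm_ring

lemma Pop_sum : ∑ r ∈ Finset.range k, Pop k (r : ℤ) = 1 := by
  apply LinearMap.ext; intro v; funext i
  rw [LinearMap.sum_apply]
  show (∑ r ∈ Finset.range k, Pop k (r:ℤ) v) i = v i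
  rw [Finset.sum_apply]
  have knz' := knz hk
  set R : ℕ := (i % (k:ℤ)).toNat with hR
  have hRcast : (R : ℤ) = i % k := Int.toNat_of_nonneg (Int.emod_nonneg i knz')
  have hRlt : R < k := by
    have := Int.emod_lt_of_pos i (by positivity : (0:ℤ) < k)
    omega
  have hcong : ∀ r ∈ Finset.range k,
      (Pop k (r:ℤ) v) i = (if r = R then (1:ℝ) else 0) * v i := by
    intro r hr
    have hrk : r < k := Finset.mem_range.mp hr
    show (if (k:ℤ) ∣ i - r then (1:ℝ) else 0) * v i = _
    congr 1
    by_cases hd : (k:ℤ) ∣ i - r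
    · rw [if_pos hd, if_pos ?_]
      have hd' : (k:ℤ) ∣ (r:ℤ) - i := by
        have h3 := Int.dvd_neg.mpr hd; rwa [neg_sub] at h3
      have h1 : (r:ℤ) % k = i % k := (Int.modEq_iff_dvd.mpr hd').symm
      have h2 : (r:ℤ) % k = r := Int.emod_eq_of_lt (by positivity) (by exact_mod_cast hrk)
      have : (r : ℤ) = (R : ℤ) := by rw [hRcast, ← h1, h2]
      exact_mod_cast this
    · rw [if_neg hd, if_neg ?_]
      intro hc
      apply hd
      subst hc
      have : i - (R:ℤ) = k * (i / k) := by
        rw [hRcast, Int.emod_def]; ring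
      exact ⟨i / k, this⟩
  rw [Finset.sum_congr rfl hcong, ← Finset.sum_mul,
    Finset.sum_ite_eq' (Finset.range k) R (fun _ => (1:ℝ)),
    if_pos (Finset.mem_range.mpr hRlt), one_mul]

lemma mul_Pop_eq_zero {E : Module.End ℝ (ℤ → ℝ)} (r : ℤ)
    (hc : E * Pop k r = Pop k r * E) (hz : Phi k r E = 0) : E * Pop k r = 0 := by
  have h1 : E * imap k r = 0 := by
    calc E * imap k r = E * (Pop k r * imap k r) := by rw [Pop_imap hk]
      _ = (E * Pop k r) * imap k r := by noncomm_ring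
      _ = (Pop k r * E) * imap k r := by rw [hc]
      _ = ((imap k r * pmap k r) * E) * imap k r := by rw [imap_pmap hk]
      _ = imap k r * (pmap k r * E * imap k r) := by noncomm_ring
      _ = imap k r * Phi k r E := rfl
      _ = 0 := by rw [hz, mul_zero]
  calc E * Pop k r = E * (imap k r * pmap k r) := by rw [imap_pmap hk]
    _ = (E * imap k r) * pmap k r := by noncomm_ring
    _ = 0 := by rw [h1, zero_mul]

lemma eq_zero_of_Phi_zero {E : Module.End ℝ (ℤ → ℝ)}
    (hc : ∀ r : ℤ, E * Pop k r = Pop k r * E)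
    (hz : ∀ r : ℤ, Phi k r E = 0) : E = 0 := by
  calc E = E * 1 := (mul_one E).symm
    _ = E * ∑ r ∈ Finset.range k, Pop k (r : ℤ) := by rw [Pop_sum hk]
    _ = ∑ r ∈ Finset.range k, E * Pop k (r : ℤ) := by rw [Finset.mul_sum]
    _ = 0 := Finset.sum_eq_zero fun r _ => mul_Pop_eq_zero hk _ (hc _) (hz _)

omit hk

variable (n : ℕ)

/-- The main algebra homomorphism. -/
noncomputable def PhiHom (hn : 1 ≤ n) (hk : 1 ≤ k) :
    ↥(DOk n k) →ₐ[ℝ] (Fin (Nat.gcd n k) → ↥(DOk (n / Nat.gcd n k) 1)) where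
  toFun E := fun ρ => ⟨Phi k ((ρ : ℕ) : ℤ) E.1, (good_of_mem hn hk E.2).2.2 _⟩
  map_one' := by
    funext ρ; exact Subtype.ext (Phi_one hk _)
  map_mul' E F := by
    funext ρ; exact Subtype.ext (Phi_mul hk _ ((good_of_mem hn hk E.2).1 _))
  map_add' E F := by
    funext ρ; exact Subtype.ext (Phi_add _ _ _)
  map_zero' := by
    funext ρ; apply Subtype.ext
    show Phi k _ 0 = 0
    unfold Phi; rw [mul_zero, zero_mul]
  commutes' c := by
    funext ρ; exact Subtype.ext (Phi_algebraMap hk _ c)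

lemma PhiHom_apply (hn : 1 ≤ n) (hk : 1 ≤ k) (E : ↥(DOk n k)) (ρ : Fin (Nat.gcd n k)) :
    ((PhiHom n hn hk E ρ : Module.End ℝ (ℤ → ℝ))) = Phi k ((ρ:ℕ):ℤ) E.1 := rfl

lemma PhiHom_injective (hn : 1 ≤ n) (hk : 1 ≤ k) : Function.Injective (PhiHom n hn hk) := by
  have hg : 0 < Nat.gcd n k := Nat.gcd_pos_of_pos_left k hn
  rw [injective_iff_map_eq_zero]
  intro E hE0
  have hzero : ∀ ρ : Fin (Nat.gcd n k), Phi k ((ρ:ℕ):ℤ) E.1 = 0 := by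
    intro ρ
    have := congrFun hE0 ρ
    exact congrArg Subtype.val this
  have hgood := good_of_mem hn hk E.2
  set g : ℕ := Nat.gcd n k with hgdef
  have hall : ∀ r' : ℤ, Phi k r' E.1 = 0 := by
    intro r'
    set ρz : ℤ := r' % (g:ℤ) with hρz
    have hgz : (0:ℤ) < (g:ℤ) := by exact_mod_cast hg
    have hρnn : 0 ≤ ρz := Int.emod_nonneg r' (by omega)
    have hρlt : ρz < g := Int.emod_lt_of_pos r' hgz
    set u : ℤ := Nat.gcdA n k
    set v : ℤ := Nat.gcdB n k
    have hbez : (g:ℤ) = n * u + k * v := Nat.gcd_eq_gcd_ab n k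
    set w : ℤ := r' / (g:ℤ) with hw
    have hr' : r' = ρz + (w * v) * k + (w * u) * n := by
      have h1 : r' = ρz + g * w := by rw [hρz, hw, Int.emod_def]; ring
      rw [h1, hbez]; ring
    have hρfin : (⟨ρz.toNat, by omega⟩ : Fin g) = ⟨ρz.toNat, by omega⟩ := rfl
    have hPhiρ : Phi k ρz E.1 = 0 := by
      have := hzero ⟨ρz.toNat, by omega⟩
      have hcast : ((ρz.toNat : ℕ) : ℤ) = ρz := Int.toNat_of_nonneg hρnn
      rwa [hcast] at this
    rw [hr', Phi_conj hk _ _ _ hgood.2.1, hPhiρ, mul_zero, zero_mul]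
  have : E.1 = 0 := eq_zero_of_Phi_zero hk hgood.1 hall
  exact Subtype.ext this

lemma fin_eq_of_dvd {g : ℕ} (hg : 0 < g) (ρ ρ0 : Fin g)
    (h : (g:ℤ) ∣ ((ρ:ℕ):ℤ) - ((ρ0:ℕ):ℤ)) : ρ = ρ0 := by
  obtain ⟨c, hc⟩ := h
  have h1 : ((ρ:ℕ):ℤ) < g := by exact_mod_cast ρ.isLt
  have h2 : ((ρ0:ℕ):ℤ) < g := by exact_mod_cast ρ0.isLt
  have h3 : (0:ℤ) ≤ ((ρ:ℕ):ℤ) := by positivity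
  have h4 : (0:ℤ) ≤ ((ρ0:ℕ):ℤ) := by positivity
  have hc0 : c = 0 := by
    rcases lt_trichotomy c 0 with h5 | h5 | h5
    · nlinarith [mul_le_mul_of_nonneg_left (by omega : c ≤ -1) (by positivity : (0:ℤ) ≤ (g:ℤ))]
    · exact h5
    · nlinarith [mul_le_mul_of_nonneg_left (by omega : (1:ℤ) ≤ c) (by positivity : (0:ℤ) ≤ (g:ℤ))]
  rw [hc0, mul_zero, sub_eq_zero] at hc
  have : (ρ:ℕ) = (ρ0:ℕ) := by exact_mod_cast hc
  exact Fin.ext this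

section Surj

variable (hn : 1 ≤ n) (hk : 1 ≤ k)

/-- the indicator sequence of the coset ρ0 + gℤ -/
noncomputable def chi (g : ℕ) (r0 : ℤ) : ℤ → ℝ := fun i => if (g:ℤ) ∣ i - r0 then 1 else 0

lemma chi_periodic (g : ℕ) (hgn : g ∣ n) (r0 : ℤ) : ∀ i : ℤ, chi g r0 (i + n) = chi g r0 i := by
  intro i
  unfold chi
  have : ((g:ℤ) ∣ i + n - r0) ↔ ((g:ℤ) ∣ i - r0) := by
    have hgn' : (g:ℤ) ∣ (n:ℤ) := by exact_mod_cast hgn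
    constructor <;> intro h
    · have h2 := Int.dvd_sub h hgn'
      have e : i + n - r0 - n = i - r0 := by ring
      rwa [e] at h2
    · have h2 := Int.dvd_add h hgn'
      have e : i - r0 + n = i + n - r0 := by ring
      rwa [e] at h2
  simp only [this]

lemma gcd_facts (N K : ℕ) (hN : 1 ≤ N) (hK : 1 ≤ K) :
    ∃ (g m k' : ℕ), g = Nat.gcd N K ∧ m = N / g ∧ k' = K / g ∧
    0 < g ∧ (N:ℤ) = g * m ∧ (K:ℤ) = g * k' := by
  refine ⟨Nat.gcd N K, N / Nat.gcd N K, K / Nat.gcd N K, rfl, rfl, rfl,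
    Nat.gcd_pos_of_pos_left K hN, ?_, ?_⟩
  · exact_mod_cast (Nat.mul_div_cancel' (Nat.gcd_dvd_left N K)).symm
  · exact_mod_cast (Nat.mul_div_cancel' (Nat.gcd_dvd_right N K)).symm

include hn hk

lemma range_single (ρ0 : Fin (Nat.gcd n k)) (y : Module.End ℝ (ℤ → ℝ))
    (hy : y ∈ DOk (n / Nat.gcd n k) 1)
    (E0 : Module.End ℝ (ℤ → ℝ)) (h0 : E0 ∈ DOk n k)
    (hmain : ∀ ρ : Fin (Nat.gcd n k), Phi k ((ρ:ℕ):ℤ) E0 = if ρ = ρ0 then y else 0) :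
    Pi.single ρ0 (⟨y, hy⟩ : ↥(DOk (n / Nat.gcd n k) 1)) ∈ (PhiHom n hn hk).range := by
  refine ⟨⟨E0, h0⟩, ?_⟩
  funext ρ
  apply Subtype.ext
  show Phi k ((ρ:ℕ):ℤ) E0 = _
  rw [hmain ρ]
  by_cases h : ρ = ρ0
  · subst h; rw [if_pos rfl, Pi.single_eq_same]
  · rw [if_neg h, Pi.single_eq_of_ne h]; rfl

/-- Φ of the indicator operator is the tuple idempotent -/
lemma Phi_chi (ρ0 ρ : Fin (Nat.gcd n k)) :
    Phi k ((ρ:ℕ):ℤ) (scalOp (chi (Nat.gcd n k) ((ρ0:ℕ):ℤ))) =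
      if ρ = ρ0 then 1 else 0 := by
  obtain ⟨g, m, k', hg, hm, hk', hgpos, hnz, hkz⟩ := gcd_facts n k hn hk
  rw [Phi_scalOp hk]
  by_cases h : ρ = ρ0
  · subst h
    rw [if_pos rfl]
    have : ∀ i : ℤ, chi (Nat.gcd n k) ((ρ:ℕ):ℤ) (((ρ:ℕ):ℤ) + k * i) = 1 := by
      intro i
      unfold chi
      rw [if_pos ⟨k' * i, by rw [hg] at hkz; rw [show ((ρ:ℕ):ℤ) + k * i - ((ρ:ℕ):ℤ) = (k:ℤ) * i by ring, hkz]; ring⟩]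
    rw [scalOp_congr this]
    exact scalOp_one
  · rw [if_neg h]
    have : ∀ i : ℤ, chi (Nat.gcd n k) ((ρ0:ℕ):ℤ) (((ρ:ℕ):ℤ) + k * i) = 0 := by
      intro i
      unfold chi
      rw [if_neg ?_]
      intro hd
      apply h
      apply fin_eq_of_dvd (hg ▸ hgpos) ρ ρ0
      have hki : ((Nat.gcd n k : ℕ):ℤ) ∣ (k:ℤ) * i := ⟨k' * i, by rw [hg] at hkz; rw [hkz]; ring⟩
      have h2 := Int.dvd_sub hd hki
      have e : ((ρ:ℕ):ℤ) + k * i - ((ρ0:ℕ):ℤ) - (k:ℤ) * i = ((ρ:ℕ):ℤ) - ((ρ0:ℕ):ℤ) := by ring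
      rwa [e] at h2
    rw [scalOp_congr this]
    exact scalOp_zero

end Surj

omit hk

set_option maxHeartbeats 1000000
set_option synthInstance.maxHeartbeats 1000000

lemma pi_single_mul {ι : Type*} [DecidableEq ι] {A : Type*} [MulZeroClass A]
    (i : ι) (x y : A) :
    (Pi.single i (x * y) : ι → A) = Pi.single i x * Pi.single i y := by
  funext j
  by_cases h : j = i
  · subst h; simp
  · simp [Pi.single_eq_of_ne h]

lemma scal_pre_core (nn kk : ℕ) (hkk : 1 ≤ kk) (g m k' : ℕ) (v : ℤ) (hgpos : 0 < g)
    (hnz : (nn:ℤ) = g * m) (hkz : (kk:ℤ) = g * k')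
    (hu : ∃ u : ℤ, (k':ℤ) * v - 1 = (m:ℤ) * u)
    (r0 : ℤ) (b : ℤ → ℝ) (hb : ∀ i : ℤ, b (i + (m:ℕ)) = b i) :
    ∃ c : ℤ → ℝ, (∀ i : ℤ, c (i + (nn:ℕ)) = c i) ∧
      (Phi kk r0 (scalOp c) = scalOp b) ∧
      (∀ r : ℤ, ¬ ((g:ℤ) ∣ r - r0) → Phi kk r (scalOp c) = 0) := by
  have gnz : (g:ℤ) ≠ 0 := by exact_mod_cast Nat.pos_iff_ne_zero.mp hgpos
  obtain ⟨u, hu⟩ := hu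
  set c : ℤ → ℝ := fun i => if (g:ℤ) ∣ i - r0 then b (v * ((i - r0) / g)) else 0 with hc
  refine ⟨c, ?_, ?_, ?_⟩
  · intro i
    by_cases hd : (g:ℤ) ∣ i - r0
    · have hd2 : (g:ℤ) ∣ i + nn - r0 := by
        have h2 := Int.dvd_add hd ⟨m, hnz⟩
        have e : i - r0 + nn = i + nn - r0 := by ring
        rwa [e] at h2
      rw [hc]
      simp only [if_pos hd, if_pos hd2]
      have hdiv : (i + (nn:ℤ) - r0) / g = (i - r0) / g + m := by
        have e : i + (nn:ℤ) - r0 = (i - r0) + (m:ℤ) * g := by rw [hnz]; ring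
        rw [e, Int.add_mul_ediv_right _ _ gnz]
      rw [hdiv]
      exact periodic_dvd hb ⟨v, by ring⟩
    · have hd2 : ¬ ((g:ℤ) ∣ i + nn - r0) := by
        intro hcon
        apply hd
        have h2 := Int.dvd_sub hcon ⟨m, hnz⟩
        have e : i + nn - r0 - nn = i - r0 := by ring
        rwa [e] at h2
      rw [hc]; simp only [if_neg hd, if_neg hd2]
  · rw [Phi_scalOp hkk]
    have key : ∀ i : ℤ, c (r0 + kk * i) = b i := by
      intro i
      have e1 : r0 + (kk:ℤ) * i - r0 = (g:ℤ) * (k' * i) := by rw [hkz]; ring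
      have hd : (g:ℤ) ∣ r0 + kk * i - r0 := ⟨k' * i, e1⟩
      rw [hc]
      simp only [if_pos hd]
      rw [e1, Int.mul_ediv_cancel_left _ gnz]
      apply periodic_dvd hb
      refine ⟨u * i, ?_⟩
      have e2 : v * ((k':ℤ) * i) - i = ((k':ℤ) * v - 1) * i := by ring
      rw [e2, hu]; ring
    rw [scalOp_congr key]
  · intro r hr
    rw [Phi_scalOp hkk]
    have key : ∀ i : ℤ, c (r + kk * i) = 0 := by
      intro i
      rw [hc]
      refine if_neg ?_
      intro hd
      apply hr
      have hki : (g:ℤ) ∣ (kk:ℤ) * i := ⟨k' * i, by rw [hkz]; ring⟩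
      have h2 := Int.dvd_sub hd hki
      have e : r + (kk:ℤ) * i - r0 - (kk:ℤ) * i = r - r0 := by ring
      rwa [e] at h2
    rw [scalOp_congr key]
    exact scalOp_zero

lemma single_mem_range (nn kk : ℕ) (hnn : 1 ≤ nn) (hkk : 1 ≤ kk)
    (ρ0 : Fin (Nat.gcd nn kk)) (y : Module.End ℝ (ℤ → ℝ))
    (hy : y ∈ DOk (nn / Nat.gcd nn kk) 1) :
    Pi.single ρ0 (⟨y, hy⟩ : ↥(DOk (nn / Nat.gcd nn kk) 1)) ∈ (PhiHom nn hnn hkk).range := by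
  obtain ⟨g, m, k', hg, hm, hk', hgpos, hnz, hkz⟩ := gcd_facts nn kk hnn hkk
  subst hg; subst hm; subst hk'
  have gnz : ((Nat.gcd nn kk : ℕ):ℤ) ≠ 0 := by exact_mod_cast Nat.pos_iff_ne_zero.mp hgpos
  have hbez : ∃ u : ℤ, ((kk / Nat.gcd nn kk : ℕ):ℤ) * (Nat.gcdB nn kk) - 1 =
      ((nn / Nat.gcd nn kk : ℕ):ℤ) * u := by
    refine ⟨-(Nat.gcdA nn kk), ?_⟩
    have hb := Nat.gcd_eq_gcd_ab nn kk
    apply mul_left_cancel₀ gnz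
    calc ((Nat.gcd nn kk : ℕ):ℤ) * (((kk / Nat.gcd nn kk : ℕ):ℤ) * Nat.gcdB nn kk - 1)
        = (((Nat.gcd nn kk : ℕ):ℤ) * ((kk / Nat.gcd nn kk : ℕ):ℤ)) * Nat.gcdB nn kk
            - (Nat.gcd nn kk : ℕ) := by ring
      _ = (kk:ℤ) * Nat.gcdB nn kk
            - ((nn:ℤ) * Nat.gcdA nn kk + (kk:ℤ) * Nat.gcdB nn kk) := by rw [← hkz, hb]
      _ = -((nn:ℤ) * Nat.gcdA nn kk) := by ring
      _ = ((Nat.gcd nn kk : ℕ):ℤ) *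
            (((nn / Nat.gcd nn kk : ℕ):ℤ) * -(Nat.gcdA nn kk)) := by rw [hnz]; ring
  have hchi_mem : scalOp (chi (Nat.gcd nn kk) ((ρ0:ℕ):ℤ)) ∈ DOk nn kk :=
    scalOp_mem nn kk (chi_periodic nn (Nat.gcd nn kk) (Nat.gcd_dvd_left nn kk) _)
  have hone : ∀ hy1 : (1 : Module.End ℝ (ℤ → ℝ)) ∈ DOk (nn / Nat.gcd nn kk) 1,
      Pi.single ρ0 (⟨1, hy1⟩ : ↥(DOk (nn / Nat.gcd nn kk) 1)) ∈ (PhiHom nn hnn hkk).range :=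
    fun hy1 => range_single hkk nn hnn hkk ρ0 1 hy1 _ hchi_mem (Phi_chi hkk nn hnn ρ0)
  induction hy using Algebra.adjoin_induction with
  | mem x hx =>
    rcases hx with hscal | hsh
    · obtain ⟨b, hb, rfl⟩ := hscal
      obtain ⟨c, hcper, hc1, hc2⟩ :=
        scal_pre_core nn kk hkk (Nat.gcd nn kk) (nn / Nat.gcd nn kk) (kk / Nat.gcd nn kk)
          (Nat.gcdB nn kk) hgpos hnz hkz hbez ((ρ0:ℕ):ℤ) b hb
      apply range_single hkk nn hnn hkk ρ0 _ _ (scalOp c) (scalOp_mem nn kk hcper)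
      intro ρ
      by_cases h : ρ = ρ0
      · subst h; rw [if_pos rfl]; exact hc1
      · rw [if_neg h]
        apply hc2
        intro hd
        exact h (fin_eq_of_dvd hgpos ρ ρ0 hd)
    · have hPmul : ∀ j : ℤ, ∀ ρ : Fin (Nat.gcd nn kk),
          Phi kk ((ρ:ℕ):ℤ) (scalOp (chi (Nat.gcd nn kk) ((ρ0:ℕ):ℤ)) * shiftZ j) =
            (if ρ = ρ0 then 1 else 0) * Phi kk ((ρ:ℕ):ℤ) (shiftZ j) := by
        intro j ρ
        rw [Phi_mul hkk _ (scal_comm_Pop _ _), Phi_chi hkk nn hnn ρ0 ρ]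
      rcases hsh with h | h
      · subst h
        apply range_single hkk nn hnn hkk ρ0 _ _
          (scalOp (chi (Nat.gcd nn kk) ((ρ0:ℕ):ℤ)) * shiftZ kk)
          (mul_mem hchi_mem (shift_mem nn kk))
        intro ρ
        rw [hPmul, Phi_shift_pos hkk]
        by_cases h : ρ = ρ0
        · subst h; rw [if_pos rfl, if_pos rfl, one_mul, Nat.cast_one]
        · rw [if_neg h, if_neg h, zero_mul]
      · rw [Set.mem_singleton_iff] at h
        subst h
        apply range_single hkk nn hnn hkk ρ0 _ _
          (scalOp (chi (Nat.gcd nn kk) ((ρ0:ℕ):ℤ)) * shiftZ (-(kk:ℤ)))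
          (mul_mem hchi_mem (shift_neg_mem nn kk))
        intro ρ
        rw [hPmul, Phi_shift_neg hkk]
        by_cases h : ρ = ρ0
        · subst h; rw [if_pos rfl, if_pos rfl, one_mul, Nat.cast_one]
        · rw [if_neg h, if_neg h, zero_mul]
  | algebraMap c =>
    have he : (⟨algebraMap ℝ (Module.End ℝ (ℤ → ℝ)) c, Subalgebra.algebraMap_mem _ c⟩ :
        ↥(DOk (nn / Nat.gcd nn kk) 1)) = c • 1 := by
      apply Subtype.ext
      show algebraMap ℝ (Module.End ℝ (ℤ → ℝ)) c = c • 1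
      rw [Algebra.algebraMap_eq_smul_one]
    rw [he, Pi.single_smul]
    exact Subalgebra.smul_mem _ (hone (one_mem _)) c
  | add x y hx hy ihx ihy =>
    have he : (⟨x + y, add_mem hx hy⟩ : ↥(DOk (nn / Nat.gcd nn kk) 1)) =
        ⟨x, hx⟩ + ⟨y, hy⟩ := rfl
    rw [he, Pi.single_add]
    exact add_mem ihx ihy
  | mul x y hx hy ihx ihy =>
    have he : (⟨x * y, mul_mem hx hy⟩ : ↥(DOk (nn / Nat.gcd nn kk) 1)) =
        (⟨x, hx⟩ : ↥(DOk (nn / Nat.gcd nn kk) 1)) * ⟨y, hy⟩ := rfl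
    rw [he, pi_single_mul]
    exact mul_mem ihx ihy

lemma PhiHom_surjective (nn kk : ℕ) (hnn : 1 ≤ nn) (hkk : 1 ≤ kk) :
    Function.Surjective (PhiHom (k := kk) nn hnn hkk) := by
  intro f
  have hmem : f ∈ (PhiHom (k := kk) nn hnn hkk).range := by
    have hf : f = ∑ ρ0 : Fin (Nat.gcd nn kk), Pi.single ρ0 (f ρ0) :=
      (Finset.univ_sum_single f).symm
    rw [hf]
    apply Subalgebra.sum_mem
    intro ρ0 _
    have h1 := single_mem_range nn kk hnn hkk ρ0 (f ρ0).1 (f ρ0).2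
    simpa using h1
  obtain ⟨E, hE⟩ := hmem
  exact ⟨E, hE⟩

noncomputable def funUniqueAlg (A : Type*) [Semiring A] [Algebra ℝ A] :
    (Fin 1 → A) ≃ₐ[ℝ] A where
  toFun f := f 0
  invFun a := fun _ => a
  left_inv f := funext fun i => by rw [Subsingleton.elim i 0]
  right_inv a := rfl
  map_mul' f g := rfl
  map_add' f g := rfl
  commutes' c := rfl

end DOkProof

/-- With `g = gcd(n,k)`, the algebra `DO_n(kℤ)` is isomorphic as an associative
`ℝ`-algebra to the `g`-fold direct product of the algebra `DO_{n/g}`; in particular,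
if `gcd(n,k) = 1`, then `DO_n(kℤ) ≅ DO_n`. -/
theorem DOk_iso_product (n k : ℕ) (hn : 1 ≤ n) (hk : 1 ≤ k) :
    Nonempty (↥(DOk n k) ≃ₐ[ℝ] (Fin (Nat.gcd n k) → ↥(DOk (n / Nat.gcd n k) 1))) ∧
    (Nat.gcd n k = 1 → Nonempty (↥(DOk n k) ≃ₐ[ℝ] ↥(DOk n 1))) := by
  have e1 : Nonempty (↥(DOk n k) ≃ₐ[ℝ] (Fin (Nat.gcd n k) → ↥(DOk (n / Nat.gcd n k) 1))) :=
    ⟨AlgEquiv.ofBijective (DOkProof.PhiHom n hn hk)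
      ⟨DOkProof.PhiHom_injective n hn hk, DOkProof.PhiHom_surjective n k hn hk⟩⟩
  refine ⟨e1, ?_⟩
  intro hgcd
  rw [hgcd, Nat.div_one] at e1
  obtain ⟨e⟩ := e1
  exact ⟨e.trans (DOkProof.funUniqueAlg _)⟩
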